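/- Removing a Conwell heptad from the off-quadric configuration yields a configuration isomorphic to G₂(7): for any Conwell heptad H, there exists a bijection g from the set of off-quadric points not in H (a set of 21 points) to the 2-element subsets of Fin 7 such that for all pairwise distinct off-quadric points a, b, c not in H, one has a + b + c = 0 if and only if (g(a) ∪ g(b) ∪ g(c)).card = 3. -/
import Mathlib


/-- The hyperbolic quadratic form on GF(2)^6. -/
def Q (v : Fin 6 → ZMod 2) : ZMod 2 := v 0 * v 1 + v 2 * v 3 + v 4 * v 5

/-- A Conwell heptad: a set of seven off-quadric points such that the line joining any
two of them is external to the quadric. -/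
def IsConwellHeptad (H : Finset (Fin 6 → ZMod 2)) : Prop :=
  H.card = 7 ∧ (∀ v ∈ H, v ≠ 0 ∧ Q v = 1) ∧
    ∀ a ∈ H, ∀ b ∈ H, a ≠ b → Q (a + b) = 1

open scoped symmDiff

namespace ConwellAux

abbrev V := Fin 6 → ZMod 2

def B (u v : V) : ZMod 2 := u 0 * v 1 + u 1 * v 0 + u 2 * v 3 + u 3 * v 2 + u 4 * v 5 + u 5 * v 4

lemma Q_add (u v : V) : Q (u + v) = Q u + Q v + B u v := by
  simp [Q, B, Pi.add_apply]; ring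

lemma B_zero_left (w : V) : B 0 w = 0 := by simp [B]

lemma B_add_left (u v w : V) : B (u + v) w = B u w + B v w := by
  simp [B, Pi.add_apply]; ring

lemma B_self (v : V) : B v v = 0 := by
  have h2 : (2 : ZMod 2) = 0 := by decide
  simp [B]; ring_nf; simp [h2]

lemma B_sum {ι : Type*} (S : Finset ι) (f : ι → V) (w : V) :
    B (∑ i ∈ S, f i) w = ∑ i ∈ S, B (f i) w := by
  induction S using Finset.cons_induction with
  | empty => simp [B_zero_left]
  | cons a S ha ih => simp [Finset.sum_cons, B_add_left, ih]

lemma addself (v : V) : v + v = 0 := by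
  funext i
  have : ∀ x : ZMod 2, x + x = 0 := by decide
  simpa using this (v i)

lemma sum_symmDiff (S T : Finset (Fin 7)) (f : Fin 7 → V) :
    ∑ i ∈ (S ∆ T), f i = ∑ i ∈ S, f i + ∑ i ∈ T, f i := by
  have hS : ∑ i ∈ S \ T, f i + ∑ i ∈ S ∩ T, f i = ∑ i ∈ S, f i := by
    rw [← Finset.sum_union (Finset.disjoint_sdiff_inter S T)]
    congr 1
    rw [Finset.sdiff_union_inter]
  have hT : ∑ i ∈ T \ S, f i + ∑ i ∈ T ∩ S, f i = ∑ i ∈ T, f i := by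
    rw [← Finset.sum_union (Finset.disjoint_sdiff_inter T S)]
    congr 1
    rw [Finset.sdiff_union_inter]
  have hsd : ∑ i ∈ (S ∆ T), f i = ∑ i ∈ S \ T, f i + ∑ i ∈ T \ S, f i := by
    rw [symmDiff_def, Finset.sup_eq_union, Finset.sum_union disjoint_sdiff_sdiff]
  rw [hsd, ← hS, ← hT, Finset.inter_comm T S]
  have := addself (∑ i ∈ S ∩ T, f i)
  abel_nf
  rw [show (2 : ℤ) • (∑ i ∈ S ∩ T, f i) = ∑ i ∈ S ∩ T, f i + ∑ i ∈ S ∩ T, f i by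
    rw [two_zsmul]]
  rw [this, add_zero]

lemma B_nondeg : ∀ v : V, (∀ w : V, B v w = 0) → v = 0 := by decide

lemma card28 : (Finset.univ.filter (fun v : V => v ≠ 0 ∧ Q v = 1)).card = 28 := by decide

/-- combinatorial core about pairs in Fin 7 -/
lemma pairs_lemma (s t u : Finset (Fin 7)) (hs : s.card = 2) (ht : t.card = 2)
    (hu : u.card = 2) (hst : s ≠ t) (hsu : s ≠ u) (htu : t ≠ u) :
    (s ∆ t) ∆ u = ∅ ↔ (s ∪ t ∪ u).card = 3 := by
  have hinter : (s ∩ t).card = 1 → (s ∆ t).card = 2 := by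
    intro h1
    rw [symmDiff_eq_sup_sdiff_inf]
    have : ((s ⊔ t) \ (s ⊓ t)).card = (s ∪ t).card - (s ∩ t).card :=
      Finset.card_sdiff_of_subset (Finset.inter_subset_union)
    rw [this, h1]
    have := Finset.card_union_add_card_inter s t
    omega
  constructor
  · intro h
    have hu' : s ∆ t = u := by
      have := symmDiff_eq_bot.mp (by simpa using h : (s ∆ t) ∆ u = ⊥)
      exact this
    -- card of inter is 1
    have hsub : u ⊆ s ∪ t := hu' ▸ (by simpa using (symmDiff_le_sup : s ∆ t ≤ s ⊔ t))
    have hcardsd : (s ∆ t).card = (s ∪ t).card - (s ∩ t).card := by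
      rw [symmDiff_eq_sup_sdiff_inf]
      exact Finset.card_sdiff_of_subset (Finset.inter_subset_union)
    have hui : (s ∪ t).card + (s ∩ t).card = 4 := by
      rw [Finset.card_union_add_card_inter, hs, ht]
    have hk : (s ∩ t).card ≤ 1 := by
      by_contra hk
      push_neg at hk
      have h2 : (s ∩ t).card = 2 := le_antisymm (hs ▸ Finset.card_le_card Finset.inter_subset_left) hk
      have : s ∩ t = s := Finset.eq_of_subset_of_card_le Finset.inter_subset_left (by omega)
      have ht' : s ∩ t = t := Finset.eq_of_subset_of_card_le Finset.inter_subset_right (by omega)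
      exact hst (this ▸ ht')
    have : (s ∆ t).card = 2 := hu' ▸ hu
    have hunion3 : (s ∪ t).card = 3 := by omega
    have : s ∪ t ∪ u = s ∪ t := Finset.union_eq_left.mpr hsub
    rw [this, hunion3]
  · intro h3
    set w := s ∪ t ∪ u with hw
    have hsw : s ⊆ w := Finset.subset_union_left.trans Finset.subset_union_left
    have htw : t ⊆ w := Finset.subset_union_right.trans Finset.subset_union_left
    have huw : u ⊆ w := Finset.subset_union_right
    have hdw : s ∆ t ⊆ w := le_trans symmDiff_le_sup (Finset.union_subset hsw htw)
    have hk1 : (s ∩ t).card = 1 := by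
      have hle : (s ∩ t).card ≤ 1 := by
        by_contra hk
        push_neg at hk
        have h2 : (s ∩ t).card = 2 := le_antisymm (hs ▸ Finset.card_le_card Finset.inter_subset_left) hk
        have h2' : s ∩ t = s := Finset.eq_of_subset_of_card_le Finset.inter_subset_left (by omega)
        have ht' : s ∩ t = t := Finset.eq_of_subset_of_card_le Finset.inter_subset_right (by omega)
        exact hst (h2' ▸ ht')
      have hge : 1 ≤ (s ∩ t).card := by
        by_contra hk
        push_neg at hk
        have h0 : (s ∩ t).card = 0 := by omega
        have := Finset.card_union_add_card_inter s t
        rw [hs, ht, h0] at this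
        have h4 : (s ∪ t).card = 4 := by omega
        have : (s ∪ t).card ≤ w.card := Finset.card_le_card (Finset.union_subset hsw htw)
        omega
      omega
    have hd2 : (s ∆ t).card = 2 := hinter hk1
    have hds : s ∆ t ≠ s := fun h => by
      have : t = ⊥ := symmDiff_eq_left.mp h
      simp [Finset.bot_eq_empty] at this
      rw [this] at ht; simp at ht
    have hdt : s ∆ t ≠ t := fun h => by
      have : s = ⊥ := symmDiff_eq_right.mp h
      simp [Finset.bot_eq_empty] at this
      rw [this] at hs; simp at hs
    -- s ∆ t must equal u, else 4 distinct card-2 subsets of a card-3 set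
    by_cases hdu : s ∆ t = u
    · rw [hdu, symmDiff_self]
      simp
    · exfalso
      have hmem : ∀ x ∈ ({s, t, u, s ∆ t} : Finset (Finset (Fin 7))),
          x ∈ Finset.powersetCard 2 w := by
        intro x hx
        simp only [Finset.mem_insert, Finset.mem_singleton] at hx
        rcases hx with rfl | rfl | rfl | rfl <;>
          exact Finset.mem_powersetCard.mpr ⟨by assumption, by assumption⟩
      have hsubP : ({s, t, u, s ∆ t} : Finset (Finset (Fin 7))) ⊆ Finset.powersetCard 2 w :=
        hmem
      have hcard4 : ({s, t, u, s ∆ t} : Finset (Finset (Fin 7))).card = 4 := by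
        rw [Finset.card_insert_of_notMem (by
              simp only [Finset.mem_insert, Finset.mem_singleton]
              push_neg
              exact ⟨hst, hsu, fun h => hds h.symm⟩),
            Finset.card_insert_of_notMem (by
              simp only [Finset.mem_insert, Finset.mem_singleton]
              push_neg
              exact ⟨htu, fun h => hdt h.symm⟩),
            Finset.card_insert_of_notMem (by
              simp only [Finset.mem_singleton]
              exact fun h => hdu h.symm),
            Finset.card_singleton]
      have hP : (Finset.powersetCard 2 w).card = 3 := by
        rw [Finset.card_powersetCard, h3]
        decide
      have := Finset.card_le_card hsubP
      omega

end ConwellAux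

open ConwellAux

/-- Removing a Conwell heptad from the off-quadric configuration yields a configuration
isomorphic to the combinatorial Grassmannian G₂(7). -/
theorem remove_heptad_iso_G2_7 (H : Finset (Fin 6 → ZMod 2)) (hH : IsConwellHeptad H) :
    ∃ g : {v : Fin 6 → ZMod 2 // (v ≠ 0 ∧ Q v = 1) ∧ v ∉ H} ≃
        {s : Finset (Fin 7) // s.card = 2},
      ∀ a b c : {v : Fin 6 → ZMod 2 // (v ≠ 0 ∧ Q v = 1) ∧ v ∉ H},
        a ≠ b → a ≠ c → b ≠ c →
        ((a : Fin 6 → ZMod 2) + (b : Fin 6 → ZMod 2) + (c : Fin 6 → ZMod 2) = 0 ↔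
          ((g a : Finset (Fin 7)) ∪ (g b : Finset (Fin 7)) ∪ (g c : Finset (Fin 7))).card = 3) := by
  obtain ⟨hc7, hQH, hpair⟩ := hH
  -- enumerate the heptad
  have hcard : Fintype.card {x // x ∈ H} = 7 := by rw [Fintype.card_coe, hc7]
  let e : {x // x ∈ H} ≃ Fin 7 := Fintype.equivFinOfCardEq hcard
  set h : Fin 7 → V := fun i => (e.symm i : V) with hdef
  have hmemH : ∀ i, h i ∈ H := fun i => (e.symm i).2
  have hinj : Function.Injective h := fun i j hij => by
    have : e.symm i = e.symm j := Subtype.ext hij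
    simpa using congrArg e this
  have hsurj : ∀ v ∈ H, ∃ i, h i = v := fun v hv => ⟨e ⟨v, hv⟩, by simp [hdef]⟩
  have hQ1 : ∀ i, Q (h i) = 1 := fun i => (hQH _ (hmemH i)).2
  have hne0 : ∀ i, h i ≠ 0 := fun i => (hQH _ (hmemH i)).1
  have hB1 : ∀ i j, i ≠ j → B (h i) (h j) = 1 := by
    intro i j hij
    have hne : h i ≠ h j := fun hh => hij (hinj hh)
    have := hpair _ (hmemH i) _ (hmemH j) hne
    rw [Q_add, hQ1, hQ1] at this
    have h11 : (1 : ZMod 2) + 1 = 0 := by decide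
    rw [h11, zero_add] at this
    exact this
  -- key independence claim
  have claim1 : ∀ S : Finset (Fin 7), S.Nonempty → S ≠ Finset.univ →
      ∑ i ∈ S, h i ≠ 0 := by
    intro S hne hnu heq
    -- from a point outside S : card S even
    obtain ⟨k0, hk0⟩ : ∃ k, k ∉ S := by
      by_contra hk
      push_neg at hk
      exact hnu (Finset.eq_univ_iff_forall.mpr hk)
    have heven : ((S.card : ZMod 2)) = 0 := by
      have := B_sum S h (h k0)
      rw [heq, B_zero_left] at this
      have hall : ∀ i ∈ S, B (h i) (h k0) = 1 := fun i hi =>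
        hB1 i k0 (fun hik => hk0 (hik ▸ hi))
      rw [Finset.sum_congr rfl hall, Finset.sum_const, nsmul_eq_mul, mul_one] at this
      exact this.symm
    obtain ⟨k1, hk1⟩ := hne
    have hodd : ((S.card - 1 : ℕ) : ZMod 2) = 0 := by
      have := B_sum S h (h k1)
      rw [heq, B_zero_left] at this
      rw [← Finset.add_sum_erase S _ hk1, B_self, zero_add] at this
      have hall : ∀ i ∈ S.erase k1, B (h i) (h k1) = 1 := fun i hi =>
        hB1 i k1 (Finset.ne_of_mem_erase hi)
      rw [Finset.sum_congr rfl hall, Finset.sum_const, nsmul_eq_mul, mul_one,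
        Finset.card_erase_of_mem hk1] at this
      exact this.symm
    have h1 : (2 : ℕ) ∣ S.card := by
      rwa [ZMod.natCast_eq_zero_iff] at heven
    have h2 : (2 : ℕ) ∣ S.card - 1 := by
      rwa [ZMod.natCast_eq_zero_iff] at hodd
    have hpos : 1 ≤ S.card := Finset.card_pos.mpr ⟨k1, hk1⟩
    omega
  -- the map from pairs to points
  have hQsum : ∀ s : Finset (Fin 7), s.card = 2 → Q (∑ i ∈ s, h i) = 1 := by
    intro s hs
    obtain ⟨i, j, hij, rfl⟩ := Finset.card_eq_two.mp hs
    rw [Finset.sum_pair hij]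
    exact hpair _ (hmemH i) _ (hmemH j) (fun hh => hij (hinj hh))
  have hne_univ : ∀ s : Finset (Fin 7), s.card ≤ 6 → s ≠ Finset.univ := by
    intro s hle hself
    rw [hself, Finset.card_univ, Fintype.card_fin] at hle
    omega
  have hsd_card_le : ∀ s t : Finset (Fin 7), (s ∆ t).card ≤ s.card + t.card := by
    intro s t
    calc (s ∆ t).card ≤ (s ∪ t).card :=
          Finset.card_le_card (by simpa using (symmDiff_le_sup : s ∆ t ≤ s ⊔ t))
      _ ≤ s.card + t.card := Finset.card_union_le s t
  -- points of the configuration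
  have hFmem : ∀ s : Finset (Fin 7), s.card = 2 →
      ((∑ i ∈ s, h i) ≠ 0 ∧ Q (∑ i ∈ s, h i) = 1) ∧ (∑ i ∈ s, h i) ∉ H := by
    intro s hs
    have hne : (∑ i ∈ s, h i) ≠ 0 := by
      apply claim1 s (Finset.card_pos.mp (by omega)) (hne_univ s (by omega))
    refine ⟨⟨hne, hQsum s hs⟩, ?_⟩
    intro hmem
    obtain ⟨k, hk⟩ := hsurj _ hmem
    have hzero : ∑ i ∈ (s ∆ ({k} : Finset (Fin 7))), h i = 0 := by
      rw [sum_symmDiff, Finset.sum_singleton, hk, addself]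
    have hnu : s ∆ {k} ≠ Finset.univ := by
      apply hne_univ
      have := hsd_card_le s {k}
      rw [hs, Finset.card_singleton] at this
      omega
    have hnem : (s ∆ ({k} : Finset (Fin 7))).Nonempty := by
      rw [Finset.nonempty_iff_ne_empty]
      intro hemp
      have : s = {k} := by
        have := symmDiff_eq_bot.mp (by simpa using hemp : s ∆ ({k} : Finset (Fin 7)) = ⊥)
        exact this
      rw [this, Finset.card_singleton] at hs
      omega
    exact claim1 _ hnem hnu hzero
  let F : {s : Finset (Fin 7) // s.card = 2} →
      {v : Fin 6 → ZMod 2 // (v ≠ 0 ∧ Q v = 1) ∧ v ∉ H} :=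
    fun s => ⟨∑ i ∈ s.1, h i, hFmem s.1 s.2⟩
  have hFinj : Function.Injective F := by
    intro s t hst
    have hval : ∑ i ∈ s.1, h i = ∑ i ∈ t.1, h i := congrArg Subtype.val hst
    have hzero : ∑ i ∈ (s.1 ∆ t.1), h i = 0 := by
      rw [sum_symmDiff, hval, addself]
    by_contra hne
    have hne' : s.1 ≠ t.1 := fun hh => hne (Subtype.ext hh)
    have hnem : (s.1 ∆ t.1).Nonempty := by
      rw [Finset.nonempty_iff_ne_empty]
      intro hemp
      exact hne' (symmDiff_eq_bot.mp (by simpa using hemp : s.1 ∆ t.1 = ⊥))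
    have hnu : s.1 ∆ t.1 ≠ Finset.univ := by
      apply hne_univ
      have := hsd_card_le s.1 t.1
      rw [s.2, t.2] at this
      omega
    exact claim1 _ hnem hnu hzero
  -- cardinalities
  have hsubH : H ⊆ Finset.univ.filter (fun v : V => v ≠ 0 ∧ Q v = 1) := by
    intro v hv
    simp only [Finset.mem_filter, Finset.mem_univ, true_and]
    exact hQH v hv
  have hcard21 : Fintype.card {v : Fin 6 → ZMod 2 // (v ≠ 0 ∧ Q v = 1) ∧ v ∉ H} = 21 := by
    rw [Fintype.card_subtype]
    have heq : Finset.univ.filter (fun v : V => (v ≠ 0 ∧ Q v = 1) ∧ v ∉ H)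
        = (Finset.univ.filter (fun v : V => v ≠ 0 ∧ Q v = 1)) \ H := by
      ext v
      simp only [Finset.mem_filter, Finset.mem_univ, true_and, Finset.mem_sdiff]
    rw [heq, Finset.card_sdiff_of_subset hsubH, card28, hc7]
  have hcardP : Fintype.card {s : Finset (Fin 7) // s.card = 2} = 21 := by
    rw [Fintype.card_finset_len, Fintype.card_fin]
    decide
  have hFbij : Function.Bijective F :=
    (Fintype.bijective_iff_injective_and_card F).mpr ⟨hFinj, by rw [hcardP, hcard21]⟩
  refine ⟨(Equiv.ofBijective F hFbij).symm, ?_⟩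
  set g := (Equiv.ofBijective F hFbij).symm with hg
  intro a b c hab hac hbc
  have hFa : ∀ x : {v : Fin 6 → ZMod 2 // (v ≠ 0 ∧ Q v = 1) ∧ v ∉ H},
      (x : V) = ∑ i ∈ (g x : Finset (Fin 7)), h i := by
    intro x
    have : F (g x) = x := (Equiv.ofBijective F hFbij).apply_symm_apply x
    exact (congrArg Subtype.val this).symm
  have hgab : (g a : Finset (Fin 7)) ≠ (g b : Finset (Fin 7)) :=
    fun hh => hab (g.injective (Subtype.ext hh))
  have hgac : (g a : Finset (Fin 7)) ≠ (g c : Finset (Fin 7)) :=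
    fun hh => hac (g.injective (Subtype.ext hh))
  have hgbc : (g b : Finset (Fin 7)) ≠ (g c : Finset (Fin 7)) :=
    fun hh => hbc (g.injective (Subtype.ext hh))
  rw [hFa a, hFa b, hFa c]
  set s := (g a : Finset (Fin 7))
  set t := (g b : Finset (Fin 7))
  set u := (g c : Finset (Fin 7))
  have hsum : ∑ i ∈ s, h i + ∑ i ∈ t, h i + ∑ i ∈ u, h i
      = ∑ i ∈ ((s ∆ t) ∆ u), h i := by
    rw [sum_symmDiff, sum_symmDiff]
  rw [hsum]
  have hiff : ∑ i ∈ ((s ∆ t) ∆ u), h i = 0 ↔ (s ∆ t) ∆ u = ∅ := by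
    constructor
    · intro hz
      by_contra hne
      have hnem : ((s ∆ t) ∆ u).Nonempty := Finset.nonempty_iff_ne_empty.mpr hne
      have hnu : (s ∆ t) ∆ u ≠ Finset.univ := by
        apply hne_univ
        have h1 := hsd_card_le (s ∆ t) u
        have h2 := hsd_card_le s t
        have h2a : s.card = 2 := (g a).2
        have h2b : t.card = 2 := (g b).2
        have h2c : u.card = 2 := (g c).2
        omega
      exact claim1 _ hnem hnu hz
    · intro hh
      rw [hh, Finset.sum_empty]
  rw [hiff]
  exact pairs_lemma s t u (g a).2 (g b).2 (g c).2 hgab hgac hgbc
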